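/- Let x0, x1, x2, x3, α, β ∈ ℂ, write ui = xi² for i=0,1,2,3, and assume x0 ≠ 0 and that each of x0+x1−α, x0−x1−α, x0+x3+β, x0−x3+β, x0+x2−α+β, x0−x2−α+β is nonzero. Then α(u0−u3)(u1−u2) − β(u0−u1)(u3−u2) + αβ(α−β)(u0+u1+u2+u3) − αβ(α−β)(α²−αβ+β²) = 0 if and only if [ (x0+x1+α)(x0−x1+α) / ((x0+x1−α)(x0−x1−α)) ] · [ (x0+x3−β)(x0−x3−β) / ((x0+x3+β)(x0−x3+β)) ] = (x0+x2+α−β)(x0−x2+α−β) / ((x0+x2−α+β)(x0−x2−α+β)). -/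
import Mathlib


/-- The multiplicative three-leg form of equation (Q2), centered at `x0`,
under the point transformation `u = x²`. -/
theorem Q2_threeLeg_form
    (x0 x1 x2 x3 α β : ℂ) (u0 u1 u2 u3 : ℂ)
    (hu0 : u0 = x0 ^ 2) (hu1 : u1 = x1 ^ 2) (hu2 : u2 = x2 ^ 2) (hu3 : u3 = x3 ^ 2)
    (hx0 : x0 ≠ 0)
    (d1 : x0 + x1 - α ≠ 0) (d2 : x0 - x1 - α ≠ 0)
    (d3 : x0 + x3 + β ≠ 0) (d4 : x0 - x3 + β ≠ 0)
    (d5 : x0 + x2 - α + β ≠ 0) (d6 : x0 - x2 - α + β ≠ 0) :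
    α * (u0 - u3) * (u1 - u2) - β * (u0 - u1) * (u3 - u2)
      + α * β * (α - β) * (u0 + u1 + u2 + u3)
      - α * β * (α - β) * (α ^ 2 - α * β + β ^ 2) = 0 ↔
    ((x0 + x1 + α) * (x0 - x1 + α) / ((x0 + x1 - α) * (x0 - x1 - α))) *
      ((x0 + x3 - β) * (x0 - x3 - β) / ((x0 + x3 + β) * (x0 - x3 + β))) =
    (x0 + x2 + α - β) * (x0 - x2 + α - β) /
      ((x0 + x2 - α + β) * (x0 - x2 - α + β)) := by
  subst hu0 hu1 hu2 hu3
  rw [div_mul_div_comm, div_eq_div_iff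
    (mul_ne_zero (mul_ne_zero d1 d2) (mul_ne_zero d3 d4))
    (mul_ne_zero d5 d6)]
  constructor
  · intro h
    linear_combination (4 * x0) * h
  · intro h
    have h4 : (4 : ℂ) * x0 ≠ 0 := mul_ne_zero (by norm_num) hx0
    have h2 : (4 * x0) * (α * (x0^2 - x3^2) * (x1^2 - x2^2) - β * (x0^2 - x1^2) * (x3^2 - x2^2)
      + α * β * (α - β) * (x0^2 + x1^2 + x2^2 + x3^2)
      - α * β * (α - β) * (α ^ 2 - α * β + β ^ 2)) = 0 := by linear_combination h
    exact (mul_eq_zero.mp h2).resolve_left h4
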